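/- (Erdős–Kunen–Mauldin, Theorem cited as 3.3.9) For every infinite set X ⊆ 2^ω and every real ε > 0 there exists a clopen set C ⊆ 2^ω such that μ(C) < ε and X + C = 2^ω. -/

import Mathlib

open MeasureTheory Pointwise

/-- The standard product (Haar) probability measure on the Cantor space
`2^ω = ℕ → ZMod 2`, normalized so that the whole space has measure `1`. -/
noncomputable def cantorMeasure : Measure (ℕ → ZMod 2) :=
  Measure.addHaarMeasure
    ⟨⟨Set.univ, isCompact_univ⟩, by rw [interior_univ]; exact Set.univ_nonempty⟩


private lemma ekm_key {A : Set (ℕ → ZMod 2)} (hA : A.Infinite) (n : ℕ) :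
    ∃ b : ZMod 2, {x ∈ A | x n = b}.Infinite := by
  by_contra h
  push_neg at h
  have : A ⊆ ⋃ b : ZMod 2, {x ∈ A | x n = b} := fun x hx =>
    Set.mem_iUnion.2 ⟨x n, hx, rfl⟩
  exact hA ((Set.finite_iUnion h).subset this)

noncomputable def ekmChain (X : Set (ℕ → ZMod 2)) (hX : X.Infinite) :
    ℕ → {A : Set (ℕ → ZMod 2) // A.Infinite ∧ A ⊆ X}
  | 0 => ⟨X, hX, subset_rfl⟩
  | n + 1 =>
    let A := ekmChain X hX n
    ⟨{x ∈ A.1 | x n = (ekm_key A.2.1 n).choose}, (ekm_key A.2.1 n).choose_spec,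
      fun x hx => A.2.2 hx.1⟩

lemma ekmChain_succ_subset (X : Set (ℕ → ZMod 2)) (hX : X.Infinite) (n : ℕ) :
    (ekmChain X hX (n+1)).1 ⊆ (ekmChain X hX n).1 := by
  intro x hx
  rw [ekmChain] at hx
  exact hx.1

lemma ekmChain_mono (X : Set (ℕ → ZMod 2)) (hX : X.Infinite) {n m : ℕ} (h : n ≤ m) :
    (ekmChain X hX m).1 ⊆ (ekmChain X hX n).1 := by
  induction m with
  | zero => simp_all
  | succ m ih =>
    rcases Nat.eq_or_lt_of_le h with rfl | h'
    · exact subset_rfl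
    · exact fun x hx => ih (Nat.lt_succ_iff.mp h') (ekmChain_succ_subset X hX m hx)

lemma ekmChain_agree (X : Set (ℕ → ZMod 2)) (hX : X.Infinite) (n : ℕ)
    {x y : ℕ → ZMod 2} (hx : x ∈ (ekmChain X hX (n+1)).1) (hy : y ∈ (ekmChain X hX (n+1)).1) :
    x n = y n := by
  rw [ekmChain] at hx hy
  rw [hx.2, hy.2]

/-- The "limit point" of the chain. -/
noncomputable def ekmP (X : Set (ℕ → ZMod 2)) (hX : X.Infinite) : ℕ → ZMod 2 :=
  fun n => ((ekmChain X hX (n+1)).2.1.nonempty.some) n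

lemma ekmP_spec (X : Set (ℕ → ZMod 2)) (hX : X.Infinite) {m : ℕ}
    {x : ℕ → ZMod 2} (hx : x ∈ (ekmChain X hX m).1) {k : ℕ} (hk : k < m) :
    x k = ekmP X hX k := by
  have hx' : x ∈ (ekmChain X hX (k+1)).1 := ekmChain_mono X hX hk hx
  exact (ekmChain_agree X hX k hx' ((ekmChain X hX (k+1)).2.1.nonempty.some_mem)).trans rfl

/-- For each `n`, an element of stage-`n` chain different from `p`. -/
noncomputable def ekmY (X : Set (ℕ → ZMod 2)) (hX : X.Infinite) (n : ℕ) : ℕ → ZMod 2 :=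
  (((ekmChain X hX n).2.1.diff (Set.finite_singleton (ekmP X hX))).nonempty).some

lemma ekmY_spec (X : Set (ℕ → ZMod 2)) (hX : X.Infinite) (n : ℕ) :
    ekmY X hX n ∈ (ekmChain X hX n).1 ∧ ekmY X hX n ≠ ekmP X hX := by
  have := (((ekmChain X hX n).2.1.diff (Set.finite_singleton (ekmP X hX))).nonempty).some_mem
  exact ⟨this.1, fun h => this.2 h⟩

lemma ekmY_ne_exists (X : Set (ℕ → ZMod 2)) (hX : X.Infinite) (n : ℕ) :
    ∃ k, ekmY X hX n k ≠ ekmP X hX k :=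
  Function.ne_iff.mp (ekmY_spec X hX n).2

/-- first coordinate where `ekmY n` differs from `p`. -/
noncomputable def ekmS (X : Set (ℕ → ZMod 2)) (hX : X.Infinite) (n : ℕ) : ℕ :=
  Nat.find (ekmY_ne_exists X hX n)

lemma ekmS_diff (X : Set (ℕ → ZMod 2)) (hX : X.Infinite) (n : ℕ) :
    ekmY X hX n (ekmS X hX n) ≠ ekmP X hX (ekmS X hX n) :=
  Nat.find_spec (ekmY_ne_exists X hX n)

lemma ekmS_agree (X : Set (ℕ → ZMod 2)) (hX : X.Infinite) (n : ℕ) {k : ℕ}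
    (hk : k < ekmS X hX n) : ekmY X hX n k = ekmP X hX k := by
  have := Nat.find_min (ekmY_ne_exists X hX n) hk
  simpa using this

lemma ekmS_ge (X : Set (ℕ → ZMod 2)) (hX : X.Infinite) (n : ℕ) : n ≤ ekmS X hX n := by
  by_contra h
  push_neg at h
  exact ekmS_diff X hX n (ekmP_spec X hX (ekmY_spec X hX n).1 h)

/-- indices with strictly increasing first-difference positions -/
noncomputable def ekmI (X : Set (ℕ → ZMod 2)) (hX : X.Infinite) : ℕ → ℕ
  | 0 => 0
  | i + 1 => ekmS X hX (ekmI X hX i) + 1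

lemma ekmS_mono (X : Set (ℕ → ZMod 2)) (hX : X.Infinite) :
    StrictMono (fun i => ekmS X hX (ekmI X hX i)) := by
  apply strictMono_nat_of_lt_succ
  intro i
  have h1 : ekmI X hX (i+1) ≤ ekmS X hX (ekmI X hX (i+1)) := ekmS_ge X hX _
  have h2 : ekmI X hX (i+1) = ekmS X hX (ekmI X hX i) + 1 := rfl
  omega

lemma zmod2_ne_add {a b : ZMod 2} (h : a ≠ b) : a + b = 1 := by revert h; revert a b; decide

/-- Main extraction: for any `N`, points `Y i ∈ X` (`i < N`), an anchor `p`, and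
coordinates `t j` such that `Y i` agrees with `p` at `t j` for `i < j < N`
and differs from `p` at `t i`. -/
lemma ekm_extract (X : Set (ℕ → ZMod 2)) (hX : X.Infinite) (N : ℕ) :
    ∃ (Y : ℕ → (ℕ → ZMod 2)) (p : ℕ → ZMod 2) (t : ℕ → ℕ),
      (∀ i, i < N → Y i ∈ X) ∧
      (∀ i, i < N → Y i (t i) + p (t i) = 1) ∧
      (∀ i j, i < j → j < N → Y i (t j) = p (t j)) := by
  refine ⟨fun i => ekmY X hX (ekmI X hX (N - 1 - i)), ekmP X hX,
    fun j => ekmS X hX (ekmI X hX (N - 1 - j)), ?_, ?_, ?_⟩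
  · intro i _
    exact (ekmChain X hX _).2.2 (ekmY_spec X hX _).1
  · intro i _
    exact zmod2_ne_add (ekmS_diff X hX (ekmI X hX (N - 1 - i)))
  · intro i j hij hjN
    apply ekmS_agree
    exact ekmS_mono X hX (show N - 1 - j < N - 1 - i by omega)

/-- Erdős–Kunen–Mauldin: for every infinite `X ⊆ 2^ω` and every `ε > 0` there is a clopen
set `C` with `μ(C) < ε` and `X + C = 2^ω`. -/

noncomputable def ekmH (r : ℕ) (c : ℕ → ℕ → ZMod 2) (w : ℕ → (Fin r → ZMod 2)) :
    ℕ → (Fin r → ZMod 2)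
  | i => w i + ∑ j ∈ (Finset.range i).attach, c i j.1 • ekmH r c w j.1
decreasing_by exact Finset.mem_range.mp j.2

lemma z2_addself (a : ZMod 2) : a + a = 0 := by revert a; decide

lemma ekmH_apply (r : ℕ) (c : ℕ → ℕ → ZMod 2) (w : ℕ → (Fin r → ZMod 2)) (i : ℕ) (j' : Fin r) :
    ekmH r c w i j' = w i j' + ∑ j ∈ Finset.range i, c i j * ekmH r c w j j' := by
  rw [ekmH]
  simp [Finset.sum_apply, Finset.sum_attach (Finset.range i) (fun j => c i j * ekmH r c w j j')]

theorem exists_clopen_small_add_eq_univ (X : Set (ℕ → ZMod 2)) (hX : X.Infinite)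
    (ε : ℝ) (hε : 0 < ε) :
    ∃ C : Set (ℕ → ZMod 2), IsClopen C ∧ cantorMeasure C < ENNReal.ofReal ε ∧
      X + C = Set.univ := by
  obtain ⟨r, hr⟩ := ENNReal.exists_inv_two_pow_lt
    (show ENNReal.ofReal ε ≠ 0 from (ENNReal.ofReal_pos.mpr hε).ne')
  set N := Fintype.card (Fin r → ZMod 2) with hN
  obtain ⟨Y, p, t, hYX, hdiag, hoff⟩ := ekm_extract X hX N
  let e : Fin N ≃ (Fin r → ZMod 2) := (Fintype.equivFin _).symm
  let w : ℕ → (Fin r → ZMod 2) := fun i => if h : i < N then e ⟨i, h⟩ else 0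
  let u : ℕ → (ℕ → ZMod 2) := fun i => Y i + p
  let h : ℕ → (Fin r → ZMod 2) := ekmH r (fun i j => u i (t j)) w
  let σ : (ℕ → ZMod 2) → (Fin r → ZMod 2) :=
    fun z => fun j' => ∑ j ∈ Finset.range N, z (t j) * h j j'
  -- σ is additive
  have hadd : ∀ a b, σ (a + b) = σ a + σ b := by
    intro a b
    funext j'
    simp only [σ, Pi.add_apply, add_mul, Finset.sum_add_distrib]
  -- σ (u i) = w i for i < N
  have hu : ∀ i, i < N → σ (u i) = w i := by
    intro i hi
    funext j'
    have hstep1 : ∑ j ∈ Finset.range N, u i (t j) * h j j'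
        = ∑ j ∈ Finset.range (i+1), u i (t j) * h j j' := by
      refine (Finset.sum_subset (Finset.range_subset_range.mpr hi) ?_).symm
      intro j hjN hj
      have hij : i < j := by
        simp only [Finset.mem_range] at hjN hj; omega
      have hjN' : j < N := Finset.mem_range.mp hjN
      have : u i (t j) = 0 := by
        show Y i (t j) + p (t j) = 0
        rw [hoff i j hij hjN']; exact z2_addself _
      rw [this, zero_mul]
    have hstep2 : u i (t i) = 1 := hdiag i hi
    have hstep3 : h i j' = w i j' + ∑ j ∈ Finset.range i, u i (t j) * h j j' :=
      ekmH_apply r _ w i j'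
    show ∑ j ∈ Finset.range N, u i (t j) * h j j' = w i j'
    rw [hstep1, Finset.sum_range_succ, hstep2, one_mul, hstep3]
    generalize (∑ j ∈ Finset.range i, u i (t j) * h j j') = S
    generalize w i j' = W
    rw [add_comm W S, ← add_assoc, z2_addself, zero_add]
  -- σ (Y i) = w i + σ p
  have hYi : ∀ i, i < N → σ (Y i) = w i + σ p := by
    intro i hi
    have h1 : σ (u i) = σ (Y i) + σ p := hadd (Y i) p
    have h2 := hu i hi
    funext j'
    have := congrFun (h1.symm.trans h2) j'
    simp only [Pi.add_apply] at this ⊢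
    have h3 : σ (Y i) j' + σ p j' = w i j' := this
    rw [← h3, add_assoc, z2_addself, add_zero]
  -- surjectivity of σ on the Y's
  have hsurj : ∀ τ : Fin r → ZMod 2, ∃ i, i < N ∧ σ (Y i) = τ := by
    intro τ
    refine ⟨(e.symm (τ + σ p) : Fin N), (e.symm (τ + σ p)).isLt, ?_⟩
    rw [hYi _ (e.symm (τ + σ p)).isLt]
    have hw : w (e.symm (τ + σ p) : Fin N) = τ + σ p := by
      simp only [w, dif_pos (e.symm (τ + σ p)).isLt, Fin.eta, Equiv.apply_symm_apply]
    rw [hw]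
    funext j'
    simp only [Pi.add_apply]
    rw [add_assoc, z2_addself, add_zero]
  -- the clopen set
  refine ⟨σ ⁻¹' {0}, ?_, ?_, ?_⟩
  · -- clopen
    have hcont : Continuous σ := by
      apply continuous_pi
      intro j'
      exact continuous_finset_sum _ fun j _ =>
        ((continuous_of_discreteTopology (f := fun x : ZMod 2 => x * h j j')).comp (continuous_apply (t j)))
    exact (isClopen_discrete {0}).preimage hcont
  · -- measure
    have hcont : Continuous σ := by
      apply continuous_pi
      intro j'
      exact continuous_finset_sum _ fun j _ =>
        ((continuous_of_discreteTopology (f := fun x : ZMod 2 => x * h j j')).comp (continuous_apply (t j)))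
    have hinv : cantorMeasure.IsAddLeftInvariant := by
      unfold cantorMeasure; infer_instance
    have huniv : cantorMeasure Set.univ = 1 := by
      unfold cantorMeasure; exact Measure.addHaarMeasure_self
    -- fibers
    have hfiber : ∀ τ : Fin r → ZMod 2, cantorMeasure (σ ⁻¹' {τ}) = cantorMeasure (σ ⁻¹' {0}) := by
      intro τ
      obtain ⟨i, hi, hσi⟩ := hsurj τ
      have : σ ⁻¹' {τ} = (fun z => Y i + z) ⁻¹' (σ ⁻¹' {0}) := by
        ext z
        simp only [Set.mem_preimage, Set.mem_singleton_iff]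
        rw [hadd, hσi]
        constructor
        · intro hz; rw [hz]; funext j'; exact z2_addself _
        · intro hz
          funext j'
          have := congrFun hz j'
          simp only [Pi.add_apply, Pi.zero_apply] at this
          have h4 : τ j' + (τ j' + σ z j') = τ j' + 0 := by rw [this]
          rwa [← add_assoc, z2_addself, zero_add, add_zero] at h4
      rw [this]
      exact measure_preimage_add cantorMeasure (Y i) _
    have hmeas : ∀ τ : Fin r → ZMod 2, MeasurableSet (σ ⁻¹' {τ}) := by
      intro τ
      exact (hcont.measurable (MeasurableSet.singleton τ))
    have hdisj : Pairwise (Function.onFun Disjoint (fun τ : Fin r → ZMod 2 => σ ⁻¹' {τ})) := by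
      intro τ₁ τ₂ hτ
      refine Set.disjoint_left.mpr ?_
      intro z h1 h2
      simp only [Set.mem_preimage, Set.mem_singleton_iff] at h1 h2
      exact hτ (h1.symm.trans h2)
    have hcover : Set.univ = ⋃ τ : Fin r → ZMod 2, σ ⁻¹' {τ} := by
      ext z; simp
    have hsum : (1 : ENNReal) = ∑' τ : Fin r → ZMod 2, cantorMeasure (σ ⁻¹' {τ}) := by
      rw [← huniv, hcover]
      exact measure_iUnion hdisj hmeas
    rw [tsum_fintype] at hsum
    simp_rw [hfiber] at hsum
    rw [Finset.sum_const, Finset.card_univ, ← hN, nsmul_eq_mul] at hsum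
    have hNcard : (N : ENNReal) = 2 ^ r := by
      rw [hN, Fintype.card_fun, ZMod.card, Fintype.card_fin]
      push_cast
      ring
    have hCval : cantorMeasure (σ ⁻¹' {0}) = (2 ^ r : ENNReal)⁻¹ := by
      have h2r : (2 ^ r : ENNReal) ≠ 0 := by positivity
      have h2rt : (2 ^ r : ENNReal) ≠ ⊤ := by
        exact ENNReal.pow_ne_top (by norm_num)
      rw [hNcard] at hsum
      calc cantorMeasure (σ ⁻¹' {0})
          = (2 ^ r : ENNReal)⁻¹ * ((2 ^ r : ENNReal) * cantorMeasure (σ ⁻¹' {0})) := by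
            rw [← mul_assoc, ENNReal.inv_mul_cancel h2r h2rt, one_mul]
        _ = (2 ^ r : ENNReal)⁻¹ := by rw [← hsum, mul_one]
    rw [hCval, ENNReal.inv_pow]
    exact hr
  · -- cover
    apply Set.eq_univ_of_forall
    intro z
    obtain ⟨i, hi, hσi⟩ := hsurj (σ z)
    have hc : Y i + z ∈ σ ⁻¹' {0} := by
      simp only [Set.mem_preimage, Set.mem_singleton_iff]
      rw [hadd, hσi]
      funext j'
      exact z2_addself _
    have hz : z = Y i + (Y i + z) := by
      funext k
      simp only [Pi.add_apply]
      rw [← add_assoc, z2_addself, zero_add]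
    rw [hz]
    exact Set.add_mem_add (hYX i hi) hc
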